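/- arXiv:2503.11149 — 5 statements merged into one kernel-verified Lean document; each statement's English description precedes it below -/
import Mathlib

section
/- Let N, n ∈ ℕ and let {𝒢_i}_{i=1}^n be directed graphs on a common vertex set X of size N, each 𝒢_i being d_i-regular (every vertex has in-degree and out-degree d_i) and loopless, with d_1 ≤ ⋯ ≤ d_n. Then there exists a directed graph 𝒢 (on vertex set X × {0,…,n}) whose automorphism group is isomorphic to ⋂_{i=1}^n Aut(𝒢_i). -/
/-- The automorphism group of a directed graph given by an edge relation `E`,
as a subgroup of the symmetric group of the vertex set. -/
def dirAut {V : Type*} (E : V → V → Prop) : Subgroup (Equiv.Perm V) where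
  carrier := {φ | ∀ v w, E v w ↔ E (φ v) (φ w)}
  one_mem' := by intro v w; simp
  mul_mem' := by
    intro φ ψ hφ hψ v w
    simpa [Equiv.Perm.mul_apply] using (hψ v w).trans (hφ (ψ v) (ψ w))
  inv_mem' := by
    intro φ hφ v w
    have := (hφ (φ⁻¹ v) (φ⁻¹ w)).symm
    simpa using this

lemma mem_dirAut {V : Type*} {E : V → V → Prop} {φ : Equiv.Perm V} :
    φ ∈ dirAut E ↔ ∀ v w, E v w ↔ E (φ v) (φ w) := Iff.rfl

/-- Given directed loopless `d_i`-regular graphs `𝒢_i` (`i = 1,…,n`) on a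
common vertex set `X` of size `N`, with `d_1 ≤ ⋯ ≤ d_n`, there is a directed graph on
`X × {0,…,n}` whose automorphism group is isomorphic to `⋂ᵢ Aut(𝒢_i)`. -/
theorem stmt5 (N n : ℕ) (X : Type*) [Fintype X] (hX : Fintype.card X = N)
    (E : Fin n → X → X → Prop)
    (hloop : ∀ i x, ¬ E i x x)
    (d : Fin n → ℕ)
    (hreg : ∀ i v, Nat.card {w : X // E i v w} = d i ∧ Nat.card {w : X // E i w v} = d i)
    (hmono : ∀ i j : Fin n, i ≤ j → d i ≤ d j) :
    ∃ E' : X × Fin (n + 1) → X × Fin (n + 1) → Prop,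
      Nonempty (↥(dirAut E') ≃* ↥(⨅ i : Fin n, dirAut (E i))) := by
  classical
  -- The layered graph: loops on layer 0, identity chain edges from layer k to k+1,
  -- and a copy of graph `E i` on layer `i` (for `i < n`).
  set R : X × Fin (n + 1) → X × Fin (n + 1) → Prop := fun p q =>
    (p.2 = 0 ∧ q = p) ∨ ((q.2 : ℕ) = (p.2 : ℕ) + 1 ∧ q.1 = p.1) ∨
      (p.2 = q.2 ∧ ∃ h : (p.2 : ℕ) < n, E ⟨(p.2 : ℕ), h⟩ p.1 q.1) with hRdef
  refine ⟨R, ?_⟩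
  -- self-loops characterize layer 0
  have hself : ∀ v : X × Fin (n + 1), R v v ↔ v.2 = 0 := by
    rintro ⟨x, k⟩
    simp only [hRdef]
    constructor
    · rintro (⟨h, -⟩ | ⟨h, -⟩ | ⟨-, h, hE⟩)
      · exact h
      · omega
      · exact absurd hE (hloop _ _)
    · intro h; exact Or.inl ⟨h, trivial⟩
  -- every automorphism preserves layers
  have hL1 : ∀ k : Fin (n + 1), ∀ Ψ : Equiv.Perm (X × Fin (n + 1)), Ψ ∈ dirAut R →
      ∀ x : X, (Ψ (x, k)).2 = k := by
    intro k
    induction k using Fin.induction with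
    | zero =>
      intro Ψ hΨ x
      have h0 : R (x, 0) (x, 0) := (hself _).mpr rfl
      exact (hself _).mp ((mem_dirAut.mp hΨ (x, 0) (x, 0)).mp h0)
    | succ i ih =>
      intro Ψ hΨ x
      have hedge : R (x, i.castSucc) (x, i.succ) := by
        refine Or.inr (Or.inl ⟨?_, rfl⟩); simp
      have h2 := (mem_dirAut.mp hΨ _ _).mp hedge
      have hA : (Ψ (x, i.castSucc)).2 = i.castSucc := ih Ψ hΨ x
      have hcases : (Ψ (x, i.succ)).2 = i.castSucc ∨ (Ψ (x, i.succ)).2 = i.succ := by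
        rcases h2 with ⟨-, h⟩ | ⟨h, -⟩ | ⟨h, -⟩
        · left; rw [h]; exact hA
        · right; apply Fin.ext; rw [h, hA]; simp
        · left; rw [← h]; exact hA
      rcases hcases with hbad | hgood
      · exfalso
        have hΨinv := (dirAut R).inv_mem hΨ
        have hih := ih Ψ⁻¹ hΨinv (Ψ (x, i.succ)).1
        have hw : ((Ψ (x, i.succ)).1, i.castSucc) = Ψ (x, i.succ) :=
          Prod.ext rfl hbad.symm
        rw [hw, ← Equiv.Perm.mul_apply, inv_mul_cancel, Equiv.Perm.one_apply] at hih
        have := congrArg Fin.val hih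
        simp at this
      · exact hgood
  -- inclusion of the intersection into the automorphism group of R
  have hmemF : ∀ σ : Equiv.Perm X, σ ∈ (⨅ i : Fin n, dirAut (E i)) →
      (Equiv.prodCongr σ (Equiv.refl (Fin (n + 1)))) ∈ dirAut R := by
    intro σ hσ
    have hσi : ∀ i : Fin n, ∀ v w, E i v w ↔ E i (σ v) (σ w) := fun i =>
      mem_dirAut.mp (Subgroup.mem_iInf.mp hσ i)
    rintro ⟨x, k⟩ ⟨y, l⟩
    show R (x, k) (y, l) ↔ R (σ x, k) (σ y, l)
    simp only [hRdef]
    apply or_congr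
    · exact and_congr Iff.rfl
        (by simp only [Prod.mk.injEq, σ.apply_eq_iff_eq])
    apply or_congr
    · exact and_congr Iff.rfl σ.apply_eq_iff_eq.symm
    · exact and_congr Iff.rfl (exists_congr fun h => hσi ⟨(k : ℕ), h⟩ x y)
  let F : (↥(⨅ i : Fin n, dirAut (E i))) →* ↥(dirAut R) :=
  { toFun := fun σ => ⟨Equiv.prodCongr σ.1 (Equiv.refl _), hmemF σ.1 σ.2⟩
    map_one' := by
      apply Subtype.ext; apply Equiv.ext; rintro ⟨x, k⟩
      simp
    map_mul' := by
      intro a b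
      apply Subtype.ext; apply Equiv.ext; rintro ⟨x, k⟩
      simp }
  have hinj : Function.Injective F := by
    intro a b h
    apply Subtype.ext; apply Equiv.ext; intro x
    have := congrArg (fun e : ↥(dirAut R) => ((e : Equiv.Perm (X × Fin (n + 1))) (x, 0)).1) h
    simpa [F] using this
  have hsurj : Function.Surjective F := by
    rintro ⟨Φ, hΦ⟩
    have hΦinv := (dirAut R).inv_mem hΦ
    -- the action on first components is independent of the layer
    have hL2 : ∀ k : Fin (n + 1), ∀ x, (Φ (x, k)).1 = (Φ (x, 0)).1 := by
      intro k
      induction k using Fin.induction with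
      | zero => intro x; rfl
      | succ i ih =>
        intro x
        have hedge : R (x, i.castSucc) (x, i.succ) := by
          refine Or.inr (Or.inl ⟨?_, rfl⟩); simp
        have h2 := (mem_dirAut.mp hΦ _ _).mp hedge
        have hp2 : (Φ (x, i.castSucc)).2 = i.castSucc := hL1 _ Φ hΦ x
        have hq2 : (Φ (x, i.succ)).2 = i.succ := hL1 _ Φ hΦ x
        rcases h2 with ⟨-, h⟩ | ⟨-, h⟩ | ⟨h, -⟩
        · exfalso
          have := congrArg Prod.snd h
          rw [hp2, hq2] at this
          have := congrArg Fin.val this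
          simp at this
        · rw [h]; exact ih x
        · exfalso
          rw [hp2, hq2] at h
          have := congrArg Fin.val h
          simp at this
    set f : X → X := fun x => (Φ (x, 0)).1 with hf
    set g : X → X := fun x => (Φ⁻¹ (x, 0)).1 with hg
    have hΦ0 : ∀ x, Φ (x, 0) = (f x, 0) := fun x => Prod.ext rfl (hL1 0 Φ hΦ x)
    have hΦ0' : ∀ x, Φ⁻¹ (x, 0) = (g x, 0) := fun x => Prod.ext rfl (hL1 0 Φ⁻¹ hΦinv x)
    have hgf : ∀ x, g (f x) = x := by
      intro x
      have h1 : Φ⁻¹ (f x, 0) = (x, 0) := by rw [← hΦ0 x, ← Equiv.Perm.mul_apply, inv_mul_cancel, Equiv.Perm.one_apply]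
      show (Φ⁻¹ (f x, 0)).1 = x
      rw [h1]
    have hfg : ∀ x, f (g x) = x := by
      intro x
      have h1 : Φ (g x, 0) = (x, 0) := by rw [← hΦ0' x, ← Equiv.Perm.mul_apply, mul_inv_cancel, Equiv.Perm.one_apply]
      show (Φ (g x, 0)).1 = x
      rw [h1]
    let σ : Equiv.Perm X := ⟨f, g, hgf, hfg⟩
    have hσk : ∀ (k : Fin (n + 1)) (x : X), Φ (x, k) = (σ x, k) := fun k x =>
      Prod.ext (hL2 k x) (hL1 k Φ hΦ x)
    have hmem : σ ∈ ⨅ i : Fin n, dirAut (E i) := by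
      rw [Subgroup.mem_iInf]
      intro i
      rw [mem_dirAut]
      intro x y
      have hRsame : ∀ a b : X,
          R (a, i.castSucc) (b, i.castSucc) ↔ ((i.castSucc = (0 : Fin (n+1)) ∧ b = a) ∨ E i a b) := by
        intro a b
        have hfin : (⟨((i.castSucc : Fin (n+1)) : ℕ), by simpa using i.isLt⟩ : Fin n) = i :=
          Fin.ext (by simp)
        simp only [hRdef]
        constructor
        · rintro (⟨h1, h2⟩ | ⟨h1, -⟩ | ⟨-, h, hE⟩)
          · exact Or.inl ⟨h1, congrArg Prod.fst h2⟩
          · exact absurd h1 (by omega)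
          · right
            have : (⟨((i.castSucc : Fin (n+1)) : ℕ), h⟩ : Fin n) = i := Fin.ext (by simp)
            rwa [this] at hE
        · rintro (⟨h1, h2⟩ | hE)
          · exact Or.inl ⟨h1, by rw [h2]⟩
          · refine Or.inr (Or.inr ⟨trivial, ⟨by simpa using i.isLt, ?_⟩⟩)
            rw [hfin]; exact hE
      have hiff := mem_dirAut.mp hΦ (x, i.castSucc) (y, i.castSucc)
      rw [hσk, hσk] at hiff
      rw [hRsame, hRsame] at hiff
      by_cases hxy : x = y
      · subst hxy
        constructor
        · intro hE; exact absurd hE (hloop i x)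
        · intro hE; exact absurd hE (hloop i (σ x))
      · have hσxy : σ x ≠ σ y := fun h => hxy (σ.injective h)
        constructor
        · intro hE
          rcases hiff.mp (Or.inr hE) with ⟨-, h⟩ | h
          · exact absurd h.symm hσxy
          · exact h
        · intro hE
          rcases hiff.mpr (Or.inr hE) with ⟨-, h⟩ | h
          · exact absurd h.symm hxy
          · exact h
    refine ⟨⟨σ, hmem⟩, ?_⟩
    apply Subtype.ext; apply Equiv.ext; rintro ⟨x, k⟩
    show (Equiv.prodCongr σ (Equiv.refl (Fin (n + 1)))) (x, k) = Φ (x, k)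
    rw [hσk]
    rfl
  exact ⟨(MulEquiv.ofBijective F ⟨hinj, hsurj⟩).symm⟩
end

section
/- Every finite group G is isomorphic to the automorphism group of some finite simple undirected graph (Frucht's theorem). -/
set_option linter.unusedSectionVars false

namespace Frucht

variable (G : Type) [Group G] [Fintype G] [DecidableEq G]

abbrev K : ℕ := 2 * Fintype.card G + 1

inductive Raw (G : Type) [Group G] [Fintype G] : Type
  | base : G → Raw G
  | nA : G → G → Raw G
  | nB : G → G → Raw G
  | tA : G → G → Fin (K G) → Raw G
  | tB : G → G → Fin (K G) → Raw G
  deriving DecidableEq, Fintype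

noncomputable def col (g : G) : ℕ := (Fintype.equivFin G g : ℕ) + 1

noncomputable def lenA (g : G) : ℕ := 2 * col G g - 1
noncomputable def lenB (g : G) : ℕ := 2 * col G g

noncomputable def ok : Raw G → Prop
  | .base _ => True
  | .nA _ s => s ≠ 1
  | .nB _ s => s ≠ 1
  | .tA _ s i => s ≠ 1 ∧ (i : ℕ) < lenA G s
  | .tB _ s i => s ≠ 1 ∧ (i : ℕ) < lenB G s

abbrev V := {r : Raw G // ok G r}


inductive pre : Raw G → Raw G → Prop
  | bA (g s : G) : pre (.base g) (.nA g s)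
  | AB (g s : G) : pre (.nA g s) (.nB g s)
  | Bb (g s : G) : pre (.nB g s) (.base (g * s))
  | At (g s : G) (i : Fin (K G)) : (i : ℕ) = 0 → pre (.nA g s) (.tA g s i)
  | Bt (g s : G) (i : Fin (K G)) : (i : ℕ) = 0 → pre (.nB g s) (.tB g s i)
  | tAt (g s : G) (i j : Fin (K G)) : (i : ℕ) + 1 = (j : ℕ) → pre (.tA g s i) (.tA g s j)
  | tBt (g s : G) (i j : Fin (K G)) : (i : ℕ) + 1 = (j : ℕ) → pre (.tB g s i) (.tB g s j)

lemma pre_ne {a b : Raw G} (h : pre G a b) : a ≠ b := by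
  cases h <;> intro he <;> simp [Fin.ext_iff] at he <;> omega

noncomputable def graph : SimpleGraph (V G) where
  Adj v w := pre G v.val w.val ∨ pre G w.val v.val
  symm := by constructor; intro v w h; tauto
  loopless := by
    constructor; rintro v (h | h) <;> exact pre_ne G h rfl



-- basic length facts
lemma col_pos (g : G) : 1 ≤ col G g := Nat.le_add_left 1 _
lemma col_le (g : G) : col G g ≤ Fintype.card G := (Fintype.equivFin G g).2
lemma col_inj {g h : G} (e : col G g = col G h) : g = h := by
  have : Fintype.equivFin G g = Fintype.equivFin G h := Fin.ext (by
    simpa [col] using e)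
  simpa using (Fintype.equivFin G).injective this

lemma lenA_pos (g : G) : 1 ≤ lenA G g := by
  have := col_pos G g; unfold lenA; omega
lemma lenA_lt_lenB (g : G) : lenA G g < lenB G g := by
  have := col_pos G g; unfold lenA lenB; omega
lemma lenB_lt_K (g : G) : lenB G g < K G := by
  have := col_le G g; unfold lenB; unfold K; omega
lemma lenA_lt_K (g : G) : lenA G g < K G :=
  (lenA_lt_lenB G g).trans (lenB_lt_K G g)
lemma lenA_inj {g h : G} (e : lenA G g = lenA G h) : g = h := by
  apply col_inj; have := col_pos G g; have := col_pos G h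
  unfold lenA at e; omega
lemma lenB_inj {g h : G} (e : lenB G g = lenB G h) : g = h := by
  apply col_inj; unfold lenB at e; omega
lemma lenA_ne_lenB (g h : G) : lenA G g ≠ lenB G h := by
  have := col_pos G g
  unfold lenA lenB; omega

-- vertex constructors
def vb (g : G) : V G := ⟨.base g, trivial⟩
def vA (g s : G) (hs : s ≠ 1) : V G := ⟨.nA g s, hs⟩
def vB (g s : G) (hs : s ≠ 1) : V G := ⟨.nB g s, hs⟩
def vtA (g s : G) (hs : s ≠ 1) (i : ℕ) (hi : i < lenA G s) : V G :=
  ⟨.tA g s ⟨i, hi.trans (lenA_lt_K G s)⟩, ⟨hs, hi⟩⟩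
def vtB (g s : G) (hs : s ≠ 1) (i : ℕ) (hi : i < lenB G s) : V G :=
  ⟨.tB g s ⟨i, hi.trans (lenB_lt_K G s)⟩, ⟨hs, hi⟩⟩

def prevA (g s : G) (hs : s ≠ 1) (i : ℕ) (hi : i < lenA G s) : V G :=
  if h : i = 0 then vA G g s hs else vtA G g s hs (i-1) (by omega)

def prevB (g s : G) (hs : s ≠ 1) (i : ℕ) (hi : i < lenB G s) : V G :=
  if h : i = 0 then vB G g s hs else vtB G g s hs (i-1) (by omega)

lemma adj_vA_iff (g s : G) (hs : s ≠ 1) (w : V G) :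
    (graph G).Adj (vA G g s hs) w ↔
      w = vb G g ∨ w = vB G g s hs ∨ w = vtA G g s hs 0 (lenA_pos G s) := by
  obtain ⟨wv, hw⟩ := w
  constructor
  · rintro (h | h)
    · cases h with
      | AB => exact Or.inr (Or.inl rfl)
      | At g s i h0 =>
          refine Or.inr (Or.inr (Subtype.ext ?_))
          simp [vtA, Fin.ext_iff, h0]
    · cases h with
      | bA => exact Or.inl rfl
  · rintro (h | h | h) <;> cases h
    · exact Or.inr (pre.bA g s)
    · exact Or.inl (pre.AB g s)
    · exact Or.inl (pre.At g s _ rfl)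

lemma adj_vB_iff (g s : G) (hs : s ≠ 1) (w : V G) :
    (graph G).Adj (vB G g s hs) w ↔
      w = vb G (g * s) ∨ w = vA G g s hs ∨
        w = vtB G g s hs 0 (by have := lenA_pos G s; have := lenA_lt_lenB G s; omega) := by
  obtain ⟨wv, hw⟩ := w
  constructor
  · rintro (h | h)
    · cases h with
      | Bb => exact Or.inl rfl
      | Bt g s i h0 =>
          refine Or.inr (Or.inr (Subtype.ext ?_))
          simp [vtB, Fin.ext_iff, h0]
    · cases h with
      | AB => exact Or.inr (Or.inl rfl)
  · rintro (h | h | h) <;> cases h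
    · exact Or.inl (pre.Bb g s)
    · exact Or.inr (pre.AB g s)
    · exact Or.inl (pre.Bt g s _ rfl)

lemma adj_vtA_iff (g s : G) (hs : s ≠ 1) (i : ℕ) (hi : i < lenA G s) (w : V G) :
    (graph G).Adj (vtA G g s hs i hi) w ↔
      w = prevA G g s hs i hi ∨ ∃ h : i + 1 < lenA G s, w = vtA G g s hs (i+1) h := by
  obtain ⟨wv, hw⟩ := w
  constructor
  · rintro (h | h)
    · cases h with
      | tAt g s i j hij =>
          have hjl : (j : ℕ) < lenA G s := hw.2
          refine Or.inr ⟨by simp at hij ⊢; omega, Subtype.ext ?_⟩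
          simp only [vtA]
          congr 1
          exact Fin.ext (by simp at hij ⊢; omega)
    · cases h with
      | At g s i h0 =>
          refine Or.inl ?_
          have h00 : i = 0 := by simpa using h0
          simp [prevA, vA, h00]
      | tAt g s j i hij =>
          refine Or.inl ?_
          have hi0 : i ≠ 0 := by simp at hij; omega
          refine Subtype.ext ?_
          simp only [prevA]
          rw [dif_neg (by simpa using hi0)]
          simp only [vtA]
          congr 1
          exact Fin.ext (by simp at hij ⊢; omega)
  · rintro (h | ⟨hlt, h⟩)
    · rw [h]
      by_cases h0 : i = 0
      · simp only [prevA, dif_pos h0]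
        subst h0
        exact Or.inr (pre.At g s _ rfl)
      · simp only [prevA, dif_neg h0]
        exact Or.inr (pre.tAt g s _ _ (by simp; omega))
    · rw [h]
      exact Or.inl (pre.tAt g s _ _ (by simp))

lemma adj_vtB_iff (g s : G) (hs : s ≠ 1) (i : ℕ) (hi : i < lenB G s) (w : V G) :
    (graph G).Adj (vtB G g s hs i hi) w ↔
      w = prevB G g s hs i hi ∨ ∃ h : i + 1 < lenB G s, w = vtB G g s hs (i+1) h := by
  obtain ⟨wv, hw⟩ := w
  constructor
  · rintro (h | h)
    · cases h with
      | tBt g s i j hij =>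
          have hjl : (j : ℕ) < lenB G s := hw.2
          refine Or.inr ⟨by simp at hij ⊢; omega, Subtype.ext ?_⟩
          simp only [vtB]
          congr 1
          exact Fin.ext (by simp at hij ⊢; omega)
    · cases h with
      | Bt g s i h0 =>
          refine Or.inl ?_
          have h00 : i = 0 := by simpa using h0
          simp [prevB, vB, h00]
      | tBt g s j i hij =>
          refine Or.inl ?_
          have hi0 : i ≠ 0 := by simp at hij; omega
          refine Subtype.ext ?_
          simp only [prevB]
          rw [dif_neg (by simpa using hi0)]
          simp only [vtB]
          congr 1
          exact Fin.ext (by simp at hij ⊢; omega)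
  · rintro (h | ⟨hlt, h⟩)
    · rw [h]
      by_cases h0 : i = 0
      · simp only [prevB, dif_pos h0]
        subst h0
        exact Or.inr (pre.Bt g s _ rfl)
      · simp only [prevB, dif_neg h0]
        exact Or.inr (pre.tBt g s _ _ (by simp; omega))
    · rw [h]
      exact Or.inl (pre.tBt g s _ _ (by simp))

def HasThree (v : V G) : Prop :=
  ∃ a b c : V G, (graph G).Adj v a ∧ (graph G).Adj v b ∧ (graph G).Adj v c ∧
    a ≠ b ∧ a ≠ c ∧ b ≠ c

def Big (v : V G) : Prop :=
  ∃ a b c d : V G, (graph G).Adj v a ∧ (graph G).Adj v b ∧ (graph G).Adj v c ∧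
    (graph G).Adj v d ∧ a ≠ b ∧ a ≠ c ∧ a ≠ d ∧ b ≠ c ∧ b ≠ d ∧ c ≠ d

def Small (v : V G) : Prop := ¬ HasThree G v

def IsEnd (v : V G) : Prop := ∀ a b : V G, (graph G).Adj v a → (graph G).Adj v b → a = b

lemma not_big_of_three (v x y z : V G)
    (h : ∀ w, (graph G).Adj v w → w = x ∨ w = y ∨ w = z) : ¬ Big G v := by
  rintro ⟨a, b, c, d, ha, hb, hc, hd, h1, h2, h3, h4, h5, h6⟩
  rcases h a ha with rfl | rfl | rfl <;> rcases h b hb with rfl | rfl | rfl <;>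
    rcases h c hc with rfl | rfl | rfl <;> rcases h d hd with rfl | rfl | rfl <;> simp_all

lemma small_of_two (v x y : V G)
    (h : ∀ w, (graph G).Adj v w → w = x ∨ w = y) : Small G v := by
  rintro ⟨a, b, c, ha, hb, hc, h1, h2, h3⟩
  rcases h a ha with rfl | rfl <;> rcases h b hb with rfl | rfl <;>
    rcases h c hc with rfl | rfl <;> simp_all

lemma hasThree_vA (g s : G) (hs : s ≠ 1) : HasThree G (vA G g s hs) := by
  refine ⟨vb G g, vB G g s hs, vtA G g s hs 0 (lenA_pos G s), ?_, ?_, ?_, ?_, ?_, ?_⟩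
  · exact (adj_vA_iff G g s hs _).2 (Or.inl rfl)
  · exact (adj_vA_iff G g s hs _).2 (Or.inr (Or.inl rfl))
  · exact (adj_vA_iff G g s hs _).2 (Or.inr (Or.inr rfl))
  all_goals simp [vb, vB, vtA, Subtype.ext_iff]

lemma hasThree_vB (g s : G) (hs : s ≠ 1) : HasThree G (vB G g s hs) := by
  refine ⟨vb G (g * s), vA G g s hs, vtB G g s hs 0 ?_, ?_, ?_, ?_, ?_, ?_, ?_⟩
  · have := lenA_pos G s; have := lenA_lt_lenB G s; omega
  · exact (adj_vB_iff G g s hs _).2 (Or.inl rfl)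
  · exact (adj_vB_iff G g s hs _).2 (Or.inr (Or.inl rfl))
  · exact (adj_vB_iff G g s hs _).2 (Or.inr (Or.inr rfl))
  all_goals simp [vb, vA, vtB, Subtype.ext_iff]

lemma not_big_vA (g s : G) (hs : s ≠ 1) : ¬ Big G (vA G g s hs) := by
  apply not_big_of_three G _ (vb G g) (vB G g s hs) (vtA G g s hs 0 (lenA_pos G s))
  intro w hw
  exact (adj_vA_iff G g s hs w).1 hw

lemma not_big_vB (g s : G) (hs : s ≠ 1) : ¬ Big G (vB G g s hs) := by
  apply not_big_of_three G _ (vb G (g*s)) (vA G g s hs)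
    (vtB G g s hs 0 (by have := lenA_pos G s; have := lenA_lt_lenB G s; omega))
  intro w hw
  exact (adj_vB_iff G g s hs w).1 hw

lemma small_vtA (g s : G) (hs : s ≠ 1) (i : ℕ) (hi : i < lenA G s) :
    Small G (vtA G g s hs i hi) := by
  classical
  refine small_of_two G _ (prevA G g s hs i hi)
    (if h : i + 1 < lenA G s then vtA G g s hs (i+1) h else prevA G g s hs i hi) ?_
  intro w hw
  rcases (adj_vtA_iff G g s hs i hi w).1 hw with h1 | ⟨h1, h2⟩
  · exact Or.inl h1
  · right; rw [dif_pos h1]; exact h2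

lemma small_vtB (g s : G) (hs : s ≠ 1) (i : ℕ) (hi : i < lenB G s) :
    Small G (vtB G g s hs i hi) := by
  classical
  refine small_of_two G _ (prevB G g s hs i hi)
    (if h : i + 1 < lenB G s then vtB G g s hs (i+1) h else prevB G g s hs i hi) ?_
  intro w hw
  rcases (adj_vtB_iff G g s hs i hi w).1 hw with h1 | ⟨h1, h2⟩
  · exact Or.inl h1
  · right; rw [dif_pos h1]; exact h2

lemma exists_two_gen (hn : 3 ≤ Fintype.card G) :
    ∃ s₁ s₂ : G, s₁ ≠ 1 ∧ s₂ ≠ 1 ∧ s₁ ≠ s₂ := by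
  have h2 : 1 < (Finset.univ.erase (1 : G)).card := by
    have := Finset.card_erase_of_mem (Finset.mem_univ (1 : G))
    rw [this, Finset.card_univ]
    omega
  obtain ⟨a, ha, b, hb, hab⟩ := Finset.one_lt_card.mp h2
  exact ⟨a, b, Finset.ne_of_mem_erase ha, Finset.ne_of_mem_erase hb, hab⟩

lemma big_vb (hn : 3 ≤ Fintype.card G) (g : G) : Big G (vb G g) := by
  obtain ⟨s₁, s₂, h1, h2, h12⟩ := exists_two_gen G hn
  refine ⟨vA G g s₁ h1, vA G g s₂ h2, vB G (g * s₁⁻¹) s₁ h1, vB G (g * s₂⁻¹) s₂ h2,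
    Or.inl (pre.bA g s₁), Or.inl (pre.bA g s₂), ?_, ?_, ?_, ?_, ?_, ?_, ?_, ?_⟩
  · refine Or.inr ?_
    have := pre.Bb (G := G) (g * s₁⁻¹) s₁
    simpa [inv_mul_cancel_right, vB, vb] using this
  · refine Or.inr ?_
    have := pre.Bb (G := G) (g * s₂⁻¹) s₂
    simpa [inv_mul_cancel_right, vB, vb] using this
  all_goals simp [vA, vB, Subtype.ext_iff, h12, Ne.symm h12]

lemma big_to_base (v : V G) (hv : Big G v) : ∃ g : G, v = vb G g := by
  obtain ⟨rv, hr⟩ := v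
  cases rv with
  | base g => exact ⟨g, rfl⟩
  | nA g s => exact absurd hv (not_big_vA G g s hr)
  | nB g s => exact absurd hv (not_big_vB G g s hr)
  | tA g s i =>
      have : (⟨Raw.tA g s i, hr⟩ : V G) = vtA G g s hr.1 i.val hr.2 := by
        simp [vtA, Subtype.ext_iff]
      rw [this] at hv
      obtain ⟨a, b, c, d, ha, hb, hc, hd, h1, h2, h3, h4, h5, h6⟩ := hv
      exact absurd ⟨a, b, c, ha, hb, hc, h1, h2, h4⟩ (small_vtA G g s hr.1 i.val hr.2)
  | tB g s i =>
      have : (⟨Raw.tB g s i, hr⟩ : V G) = vtB G g s hr.1 i.val hr.2 := by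
        simp [vtB, Subtype.ext_iff]
      rw [this] at hv
      obtain ⟨a, b, c, d, ha, hb, hc, hd, h1, h2, h3, h4, h5, h6⟩ := hv
      exact absurd ⟨a, b, c, ha, hb, hc, h1, h2, h4⟩ (small_vtB G g s hr.1 i.val hr.2)

lemma deg3_charac (hn : 3 ≤ Fintype.card G) (v : V G) (h3 : HasThree G v) (hb : ¬ Big G v) :
    ∃ (g s : G) (hs : s ≠ 1), v = vA G g s hs ∨ v = vB G g s hs := by
  obtain ⟨rv, hr⟩ := v
  cases rv with
  | base g => exact absurd (big_vb G hn g) hb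
  | nA g s => exact ⟨g, s, hr, Or.inl rfl⟩
  | nB g s => exact ⟨g, s, hr, Or.inr rfl⟩
  | tA g s i =>
      have : (⟨Raw.tA g s i, hr⟩ : V G) = vtA G g s hr.1 i.val hr.2 := by
        simp [vtA, Subtype.ext_iff]
      rw [this] at h3
      exact absurd h3 (small_vtA G g s hr.1 i.val hr.2)
  | tB g s i =>
      have : (⟨Raw.tB g s i, hr⟩ : V G) = vtB G g s hr.1 i.val hr.2 := by
        simp [vtB, Subtype.ext_iff]
      rw [this] at h3
      exact absurd h3 (small_vtB G g s hr.1 i.val hr.2)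

lemma isEnd_vtA_last (g s : G) (hs : s ≠ 1) (i : ℕ) (hi : i < lenA G s)
    (hlast : i + 1 = lenA G s) : IsEnd G (vtA G g s hs i hi) := by
  intro a b ha hb
  rcases (adj_vtA_iff G g s hs i hi a).1 ha with h1 | ⟨h1, _⟩
  · rcases (adj_vtA_iff G g s hs i hi b).1 hb with h2 | ⟨h2, _⟩
    · rw [h1, h2]
    · omega
  · omega

lemma not_isEnd_vtA (g s : G) (hs : s ≠ 1) (i : ℕ) (hi : i < lenA G s)
    (hlt : i + 1 < lenA G s) : ¬ IsEnd G (vtA G g s hs i hi) := by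
  intro h
  have h1 : (graph G).Adj (vtA G g s hs i hi) (prevA G g s hs i hi) :=
    (adj_vtA_iff G g s hs i hi _).2 (Or.inl rfl)
  have h2 : (graph G).Adj (vtA G g s hs i hi) (vtA G g s hs (i+1) hlt) :=
    (adj_vtA_iff G g s hs i hi _).2 (Or.inr ⟨hlt, rfl⟩)
  have := h _ _ h1 h2
  by_cases h0 : i = 0 <;>
    simp [prevA, h0, vA, vtA, Subtype.ext_iff, Fin.ext_iff] at this <;> omega

lemma isEnd_vtB_last (g s : G) (hs : s ≠ 1) (i : ℕ) (hi : i < lenB G s)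
    (hlast : i + 1 = lenB G s) : IsEnd G (vtB G g s hs i hi) := by
  intro a b ha hb
  rcases (adj_vtB_iff G g s hs i hi a).1 ha with h1 | ⟨h1, _⟩
  · rcases (adj_vtB_iff G g s hs i hi b).1 hb with h2 | ⟨h2, _⟩
    · rw [h1, h2]
    · omega
  · omega

lemma not_isEnd_vtB (g s : G) (hs : s ≠ 1) (i : ℕ) (hi : i < lenB G s)
    (hlt : i + 1 < lenB G s) : ¬ IsEnd G (vtB G g s hs i hi) := by
  intro h
  have h1 : (graph G).Adj (vtB G g s hs i hi) (prevB G g s hs i hi) :=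
    (adj_vtB_iff G g s hs i hi _).2 (Or.inl rfl)
  have h2 : (graph G).Adj (vtB G g s hs i hi) (vtB G g s hs (i+1) hlt) :=
    (adj_vtB_iff G g s hs i hi _).2 (Or.inr ⟨hlt, rfl⟩)
  have := h _ _ h1 h2
  by_cases h0 : i = 0 <;>
    simp [prevB, h0, vB, vtB, Subtype.ext_iff, Fin.ext_iff] at this <;> omega

section transport

variable (φ : Equiv.Perm (V G)) (hφ : ∀ v w, (graph G).Adj v w ↔ (graph G).Adj (φ v) (φ w))

include hφ

lemma inv_cond : ∀ v w, (graph G).Adj v w ↔ (graph G).Adj (φ⁻¹ v) (φ⁻¹ w) := by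
  intro v w
  have := hφ (φ⁻¹ v) (φ⁻¹ w)
  simp only [Equiv.Perm.coe_inv, Equiv.apply_symm_apply] at this
  exact this.symm

lemma hasThree_map {v : V G} (h : HasThree G v) : HasThree G (φ v) := by
  obtain ⟨a, b, c, ha, hb, hc, h1, h2, h3⟩ := h
  exact ⟨φ a, φ b, φ c, (hφ v a).1 ha, (hφ v b).1 hb, (hφ v c).1 hc,
    fun e => h1 (φ.injective e), fun e => h2 (φ.injective e), fun e => h3 (φ.injective e)⟩

lemma big_map {v : V G} (h : Big G v) : Big G (φ v) := by
  obtain ⟨a, b, c, d, ha, hb, hc, hd, h1, h2, h3, h4, h5, h6⟩ := h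
  exact ⟨φ a, φ b, φ c, φ d, (hφ v a).1 ha, (hφ v b).1 hb, (hφ v c).1 hc, (hφ v d).1 hd,
    fun e => h1 (φ.injective e), fun e => h2 (φ.injective e), fun e => h3 (φ.injective e),
    fun e => h4 (φ.injective e), fun e => h5 (φ.injective e), fun e => h6 (φ.injective e)⟩

lemma small_map {v : V G} (h : Small G v) : Small G (φ v) := by
  intro h3
  exact h (by simpa using hasThree_map G φ⁻¹ (inv_cond G φ hφ) h3)

lemma isEnd_map {v : V G} (h : IsEnd G v) : IsEnd G (φ v) := by
  intro a b ha hb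
  have ha' : (graph G).Adj v (φ⁻¹ a) := by
    rw [hφ v (φ⁻¹ a)]
    simpa using ha
  have hb' : (graph G).Adj v (φ⁻¹ b) := by
    rw [hφ v (φ⁻¹ b)]
    simpa using hb
  have := h _ _ ha' hb'
  simpa using congrArg φ this

def TailFrom (x : V G) (L : ℕ) : Prop :=
  ∃ z : ℕ → V G, (graph G).Adj x (z 0) ∧
    (∀ i, i + 1 < L → (graph G).Adj (z i) (z (i+1))) ∧
    (∀ i, i < L → Small G (z i)) ∧
    (∀ i, i + 2 < L → z i ≠ z (i+2)) ∧
    IsEnd G (z (L-1))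

lemma tailFrom_map {x : V G} {L : ℕ} (h : TailFrom G x L) : TailFrom G (φ x) L := by
  obtain ⟨z, h0, h1, h2, h3, h4⟩ := h
  refine ⟨fun i => φ (z i), (hφ _ _).1 h0, fun i hi => (hφ _ _).1 (h1 i hi),
    fun i hi => small_map G φ hφ (h2 i hi),
    fun i hi e => h3 i hi (φ.injective e), isEnd_map G φ hφ h4⟩

end transport

lemma tailFrom_vA (g s : G) (hs : s ≠ 1) : TailFrom G (vA G g s hs) (lenA G s) := by
  classical
  refine ⟨fun i => if h : i < lenA G s then vtA G g s hs i h else vb G 1, ?_, ?_, ?_, ?_, ?_⟩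
  · simp only [dif_pos (show 0 < lenA G s by have := lenA_pos G s; omega)]
    exact (adj_vA_iff G g s hs _).2 (Or.inr (Or.inr rfl))
  · intro i hi
    simp only [dif_pos (by omega : i < lenA G s), dif_pos hi]
    exact (adj_vtA_iff G g s hs i _ _).2 (Or.inr ⟨hi, rfl⟩)
  · intro i hi
    simp only [dif_pos hi]
    exact small_vtA G g s hs i hi
  · intro i hi
    simp only [dif_pos (by omega : i < lenA G s), dif_pos hi]
    simp [vtA, Subtype.ext_iff, Fin.ext_iff]
  · simp only [dif_pos (by have := lenA_pos G s; omega : lenA G s - 1 < lenA G s)]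
    exact isEnd_vtA_last G g s hs _ _ (by have := lenA_pos G s; omega)

lemma tailFrom_vB (g s : G) (hs : s ≠ 1) : TailFrom G (vB G g s hs) (lenB G s) := by
  classical
  have hB1 : 1 ≤ lenB G s := by have := lenA_pos G s; have := lenA_lt_lenB G s; omega
  refine ⟨fun i => if h : i < lenB G s then vtB G g s hs i h else vb G 1, ?_, ?_, ?_, ?_, ?_⟩
  · simp only [dif_pos (show 0 < lenB G s by omega)]
    exact (adj_vB_iff G g s hs _).2 (Or.inr (Or.inr rfl))
  · intro i hi
    simp only [dif_pos (by omega : i < lenB G s), dif_pos hi]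
    exact (adj_vtB_iff G g s hs i _ _).2 (Or.inr ⟨hi, rfl⟩)
  · intro i hi
    simp only [dif_pos hi]
    exact small_vtB G g s hs i hi
  · intro i hi
    simp only [dif_pos (by omega : i < lenB G s), dif_pos hi]
    simp [vtB, Subtype.ext_iff, Fin.ext_iff]
  · simp only [dif_pos (by omega : lenB G s - 1 < lenB G s)]
    exact isEnd_vtB_last G g s hs _ _ (by omega)

lemma tail_struct_A (hn : 3 ≤ Fintype.card G) (g s : G) (hs : s ≠ 1) (L : ℕ) (hL : 1 ≤ L)
    (h : TailFrom G (vA G g s hs) L) : L = lenA G s := by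
  obtain ⟨z, h0, h1, h2, h3, h4⟩ := h
  have key : ∀ i, i < L → ∃ hi : i < lenA G s, z i = vtA G g s hs i hi := by
    intro i
    induction i using Nat.strong_induction_on with
    | _ i IH =>
      intro hiL
      match i with
      | 0 =>
          rcases (adj_vA_iff G g s hs (z 0)).1 ((graph G).adj_symm h0).symm with e | e | e
          · exact absurd (e ▸ h2 0 hiL) (fun hsm => hsm (by
              exact absurd (big_vb G hn g) (fun hb => by
                obtain ⟨a, b, c, d, ha, hb', hc, hd, d1, d2, d3, d4, d5, d6⟩ := hb
                exact (e ▸ h2 0 hiL) ⟨a, b, c, ha, hb', hc, d1, d2, d4⟩)))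
          · exact absurd (hasThree_vB G g s hs) (e ▸ h2 0 hiL)
          · exact ⟨lenA_pos G s, e⟩
      | (i+1) =>
          obtain ⟨hi', hz⟩ := IH i (by omega) (by omega)
          have hadj : (graph G).Adj (vtA G g s hs i hi') (z (i+1)) := hz ▸ h1 i hiL
          rcases (adj_vtA_iff G g s hs i hi' (z (i+1))).1 hadj with e | ⟨hlt, e⟩
          · by_cases hi0 : i = 0
            · subst hi0
              rw [show prevA G g s hs 0 hi' = vA G g s hs from by simp [prevA]] at e
              exact absurd (hasThree_vA G g s hs) (e ▸ h2 1 hiL)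
            · obtain ⟨hi'', hz'⟩ := IH (i-1) (by omega) (by omega)
              rw [show prevA G g s hs i hi' = vtA G g s hs (i-1) (by omega) from by
                simp [prevA, hi0]] at e
              have : z (i-1) = z (i+1) := by
                rw [hz', e]
              exact absurd (by rw [show i - 1 + 2 = i + 1 by omega]; exact this)
                (h3 (i-1) (by omega))
          · exact ⟨hlt, e⟩
  obtain ⟨hL1, hzL⟩ := key (L-1) (by omega)
  by_cases hfin : L - 1 + 1 < lenA G s
  · exact absurd (hzL ▸ h4) (not_isEnd_vtA G g s hs (L-1) hL1 hfin)
  · omega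

lemma tail_struct_B (hn : 3 ≤ Fintype.card G) (g s : G) (hs : s ≠ 1) (L : ℕ) (hL : 1 ≤ L)
    (h : TailFrom G (vB G g s hs) L) : L = lenB G s := by
  obtain ⟨z, h0, h1, h2, h3, h4⟩ := h
  have key : ∀ i, i < L → ∃ hi : i < lenB G s, z i = vtB G g s hs i hi := by
    intro i
    induction i using Nat.strong_induction_on with
    | _ i IH =>
      intro hiL
      match i with
      | 0 =>
          rcases (adj_vB_iff G g s hs (z 0)).1 ((graph G).adj_symm h0).symm with e | e | e
          · exact absurd (big_vb G hn (g*s)) (fun hb => by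
              obtain ⟨a, b, c, d, ha, hb', hc, hd, d1, d2, d3, d4, d5, d6⟩ := hb
              exact (e ▸ h2 0 hiL) ⟨a, b, c, ha, hb', hc, d1, d2, d4⟩)
          · exact absurd (hasThree_vA G g s hs) (e ▸ h2 0 hiL)
          · exact ⟨by have := lenA_pos G s; have := lenA_lt_lenB G s; omega, e⟩
      | (i+1) =>
          obtain ⟨hi', hz⟩ := IH i (by omega) (by omega)
          have hadj : (graph G).Adj (vtB G g s hs i hi') (z (i+1)) := hz ▸ h1 i hiL
          rcases (adj_vtB_iff G g s hs i hi' (z (i+1))).1 hadj with e | ⟨hlt, e⟩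
          · by_cases hi0 : i = 0
            · subst hi0
              rw [show prevB G g s hs 0 hi' = vB G g s hs from by simp [prevB]] at e
              exact absurd (hasThree_vB G g s hs) (e ▸ h2 1 hiL)
            · obtain ⟨hi'', hz'⟩ := IH (i-1) (by omega) (by omega)
              rw [show prevB G g s hs i hi' = vtB G g s hs (i-1) (by omega) from by
                simp [prevB, hi0]] at e
              have : z (i-1) = z (i+1) := by
                rw [hz', e]
              exact absurd (by rw [show i - 1 + 2 = i + 1 by omega]; exact this)
                (h3 (i-1) (by omega))
          · exact ⟨hlt, e⟩
  obtain ⟨hL1, hzL⟩ := key (L-1) (by omega)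
  by_cases hfin : L - 1 + 1 < lenB G s
  · exact absurd (hzL ▸ h4) (not_isEnd_vtB G g s hs (L-1) hL1 hfin)
  · omega

lemma mem_dirAut_iff {W : Type} (E : W → W → Prop) (φ : Equiv.Perm W) :
    φ ∈ dirAut E ↔ ∀ v w, E v w ↔ E (φ v) (φ w) := Iff.rfl

def rawMul (a : G) : Raw G → Raw G
  | .base g => .base (a*g)
  | .nA g s => .nA (a*g) s
  | .nB g s => .nB (a*g) s
  | .tA g s i => .tA (a*g) s i
  | .tB g s i => .tB (a*g) s i

lemma rawMul_ok (a : G) (r : Raw G) (h : ok G r) : ok G (rawMul G a r) := by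
  cases r <;> simpa [ok, rawMul] using h

lemma rawMul_rawMul (a b : G) (r : Raw G) :
    rawMul G a (rawMul G b r) = rawMul G (a*b) r := by
  cases r <;> simp [rawMul, mul_assoc]

lemma rawMul_one (r : Raw G) : rawMul G 1 r = r := by
  cases r <;> simp [rawMul]

lemma pre_rawMul (a : G) {r t : Raw G} (h : pre G r t) : pre G (rawMul G a r) (rawMul G a t) := by
  cases h with
  | bA g s => exact pre.bA (a*g) s
  | AB g s => exact pre.AB (a*g) s
  | Bb g s => simpa [rawMul, mul_assoc] using pre.Bb (G := G) (a*g) s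
  | At g s i h0 => exact pre.At (a*g) s i h0
  | Bt g s i h0 => exact pre.Bt (a*g) s i h0
  | tAt g s i j hij => exact pre.tAt (a*g) s i j hij
  | tBt g s i j hij => exact pre.tBt (a*g) s i j hij

lemma pre_rawMul_iff (a : G) (r t : Raw G) :
    pre G r t ↔ pre G (rawMul G a r) (rawMul G a t) := by
  constructor
  · exact pre_rawMul G a
  · intro h
    have := pre_rawMul G a⁻¹ h
    simpa [rawMul_rawMul, rawMul_one] using this

def permMul (a : G) : Equiv.Perm (V G) where
  toFun v := ⟨rawMul G a v.1, rawMul_ok G a v.1 v.2⟩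
  invFun v := ⟨rawMul G a⁻¹ v.1, rawMul_ok G a⁻¹ v.1 v.2⟩
  left_inv v := by
    apply Subtype.ext
    simp [rawMul_rawMul, rawMul_one]
  right_inv v := by
    apply Subtype.ext
    simp [rawMul_rawMul, rawMul_one]

lemma permMul_mem (a : G) : permMul G a ∈ dirAut (graph G).Adj := by
  rw [mem_dirAut_iff]
  intro v w
  constructor
  · rintro (h | h)
    · exact Or.inl (pre_rawMul G a h)
    · exact Or.inr (pre_rawMul G a h)
  · rintro (h | h)
    · exact Or.inl ((pre_rawMul_iff G a _ _).2 h)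
    · exact Or.inr ((pre_rawMul_iff G a _ _).2 h)

def toAut : G →* ↥(dirAut (graph G).Adj) where
  toFun a := ⟨permMul G a, permMul_mem G a⟩
  map_one' := by
    apply Subtype.ext
    apply Equiv.ext
    intro v
    apply Subtype.ext
    simp [permMul, rawMul_one]
  map_mul' a b := by
    apply Subtype.ext
    apply Equiv.ext
    intro v
    apply Subtype.ext
    simp [permMul, rawMul_rawMul]

lemma toAut_injective : Function.Injective (toAut G) := by
  intro a b h
  have := congrArg (fun ψ : ↥(dirAut (graph G).Adj) => ((ψ : Equiv.Perm (V G)) (vb G 1)).1) h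
  simp only [toAut, MonoidHom.coe_mk, OneHom.coe_mk, permMul, vb, rawMul,
    Equiv.coe_fn_mk] at this
  injection this with h1
  simpa using h1

lemma hasThree_of_big {v : V G} (h : Big G v) : HasThree G v := by
  obtain ⟨a, b, c, d, ha, hb, hc, hd, h1, h2, h3, h4, h5, h6⟩ := h
  exact ⟨a, b, c, ha, hb, hc, h1, h2, h4⟩

lemma toAut_surjective (hn : 3 ≤ Fintype.card G) : Function.Surjective (toAut G) := by
  rintro ⟨φ, hφmem⟩
  have hφ : ∀ v w, (graph G).Adj v w ↔ (graph G).Adj (φ v) (φ w) := hφmem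
  have h1 : ∀ g : G, ∃ g', φ (vb G g) = vb G g' :=
    fun g => big_to_base G _ (big_map G φ hφ (big_vb G hn g))
  choose f hf using h1
  -- φ maps A-vertices correctly
  have hA : ∀ (g s : G) (hs : s ≠ 1), φ (vA G g s hs) = vA G (f g) s hs := by
    intro g s hs
    have h3 : HasThree G (φ (vA G g s hs)) := hasThree_map G φ hφ (hasThree_vA G g s hs)
    have hnb : ¬ Big G (φ (vA G g s hs)) := by
      intro hb
      have := big_map G φ⁻¹ (inv_cond G φ hφ) hb
      simp only [Equiv.Perm.coe_inv, Equiv.symm_apply_apply] at this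
      exact not_big_vA G g s hs this
    obtain ⟨g', s', hs', hcase⟩ := deg3_charac G hn _ h3 hnb
    have htf : TailFrom G (φ (vA G g s hs)) (lenA G s) :=
      tailFrom_map G φ hφ (tailFrom_vA G g s hs)
    rcases hcase with e | e
    · rw [e] at htf
      have hlen := tail_struct_A G hn g' s' hs' _ (lenA_pos G s) htf
      have hss : s = s' := lenA_inj G hlen
      subst hss
      have hadj : (graph G).Adj (vb G g) (vA G g s hs) := Or.inl (pre.bA g s)
      have hadj2 : (graph G).Adj (vA G g' s hs') (vb G (f g)) := by
        have := (hφ _ _).1 hadj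
        rw [hf g, e] at this
        exact this.symm
      rcases (adj_vA_iff G g' s hs' _).1 hadj2 with h2 | h2 | h2
      · have : f g = g' := by simpa [vb, Subtype.ext_iff] using h2
        rw [e, this]
      · exact absurd h2 (by simp [vb, vB, Subtype.ext_iff])
      · exact absurd h2 (by simp [vb, vtA, Subtype.ext_iff])
    · rw [e] at htf
      have hlen := tail_struct_B G hn g' s' hs' _ (lenA_pos G s) htf
      exact absurd hlen (lenA_ne_lenB G s s')
  -- φ maps B-vertices correctly
  have hB : ∀ (g s : G) (hs : s ≠ 1), φ (vB G g s hs) = vB G (f g) s hs := by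
    intro g s hs
    have h3 : HasThree G (φ (vB G g s hs)) := hasThree_map G φ hφ (hasThree_vB G g s hs)
    have hnb : ¬ Big G (φ (vB G g s hs)) := by
      intro hb
      have := big_map G φ⁻¹ (inv_cond G φ hφ) hb
      simp only [Equiv.Perm.coe_inv, Equiv.symm_apply_apply] at this
      exact not_big_vB G g s hs this
    obtain ⟨g', s', hs', hcase⟩ := deg3_charac G hn _ h3 hnb
    have hB1 : 1 ≤ lenB G s := by have := lenA_pos G s; have := lenA_lt_lenB G s; omega
    have htf : TailFrom G (φ (vB G g s hs)) (lenB G s) :=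
      tailFrom_map G φ hφ (tailFrom_vB G g s hs)
    rcases hcase with e | e
    · rw [e] at htf
      have hlen := tail_struct_A G hn g' s' hs' _ hB1 htf
      exact absurd hlen.symm (lenA_ne_lenB G s' s)
    · rw [e] at htf
      have hlen := tail_struct_B G hn g' s' hs' _ hB1 htf
      have hss : s = s' := lenB_inj G hlen
      subst hss
      have hadj : (graph G).Adj (vA G g s hs) (vB G g s hs) := Or.inl (pre.AB g s)
      have hadj2 : (graph G).Adj (vA G (f g) s hs) (vB G g' s hs') := by
        have := (hφ _ _).1 hadj
        rw [hA g s hs, e] at this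
        exact this
      rcases (adj_vA_iff G (f g) s hs _).1 hadj2 with h2 | h2 | h2
      · exact absurd h2 (by simp [vb, vB, Subtype.ext_iff])
      · have : g' = f g := by simpa [vB, Subtype.ext_iff] using h2
        rw [e, this]
      · exact absurd h2 (by simp [vB, vtA, Subtype.ext_iff])
  -- f is a left translation
  have hmul : ∀ (g s : G), s ≠ 1 → f (g * s) = f g * s := by
    intro g s hs
    have hadj : (graph G).Adj (vB G g s hs) (vb G (g * s)) := Or.inl (pre.Bb g s)
    have hadj2 : (graph G).Adj (vB G (f g) s hs) (vb G (f (g * s))) := by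
      have := (hφ _ _).1 hadj
      rw [hB g s hs, hf (g * s)] at this
      exact this
    rcases (adj_vB_iff G (f g) s hs _).1 hadj2 with h2 | h2 | h2
    · simpa [vb, Subtype.ext_iff] using h2
    · exact absurd h2 (by simp [vb, vA, Subtype.ext_iff])
    · exact absurd h2 (by simp [vb, vtB, Subtype.ext_iff])
  have hf1 : ∀ g : G, f g = f 1 * g := by
    intro g
    by_cases hg : g = 1
    · subst hg; simp
    · have := hmul 1 g hg
      simpa using this
  -- tails
  have htA : ∀ (g s : G) (hs : s ≠ 1) (i : ℕ) (hi : i < lenA G s),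
      φ (vtA G g s hs i hi) = vtA G (f g) s hs i hi := by
    intro g s hs i
    induction i using Nat.strong_induction_on with
    | _ i IH =>
      intro hi
      have hsm : Small G (φ (vtA G g s hs i hi)) :=
        small_map G φ hφ (small_vtA G g s hs i hi)
      match i with
      | 0 =>
          have hadj : (graph G).Adj (vA G g s hs) (vtA G g s hs 0 hi) :=
            (adj_vA_iff G g s hs _).2 (Or.inr (Or.inr rfl))
          have hadj2 : (graph G).Adj (vA G (f g) s hs) (φ (vtA G g s hs 0 hi)) := by
            have := (hφ _ _).1 hadj
            rwa [hA g s hs] at this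
          rcases (adj_vA_iff G (f g) s hs _).1 hadj2 with e | e | e
          · rw [e] at hsm
            exact absurd (hasThree_of_big G (big_vb G hn (f g))) hsm
          · rw [e] at hsm
            exact absurd (hasThree_vB G (f g) s hs) hsm
          · exact e
      | (j+1) =>
          have hj : j < lenA G s := by omega
          have hadj : (graph G).Adj (vtA G g s hs j hj) (vtA G g s hs (j+1) hi) :=
            (adj_vtA_iff G g s hs j hj _).2 (Or.inr ⟨hi, rfl⟩)
          have hadj2 : (graph G).Adj (vtA G (f g) s hs j hj) (φ (vtA G g s hs (j+1) hi)) := by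
            have := (hφ _ _).1 hadj
            rwa [IH j (by omega) hj] at this
          rcases (adj_vtA_iff G (f g) s hs j hj _).1 hadj2 with e | ⟨hlt, e⟩
          · by_cases hj0 : j = 0
            · subst hj0
              rw [show prevA G (f g) s hs 0 hj = vA G (f g) s hs from by simp [prevA]] at e
              rw [e] at hsm
              exact absurd (hasThree_vA G (f g) s hs) hsm
            · rw [show prevA G (f g) s hs j hj = vtA G (f g) s hs (j-1) (by omega) from by
                simp [prevA, hj0]] at e
              rw [← IH (j-1) (by omega) (by omega)] at e
              have := φ.injective e
              exact absurd this (by simp [vtA, Subtype.ext_iff, Fin.ext_iff]; omega)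
          · exact e
  have htB : ∀ (g s : G) (hs : s ≠ 1) (i : ℕ) (hi : i < lenB G s),
      φ (vtB G g s hs i hi) = vtB G (f g) s hs i hi := by
    intro g s hs i
    induction i using Nat.strong_induction_on with
    | _ i IH =>
      intro hi
      have hsm : Small G (φ (vtB G g s hs i hi)) :=
        small_map G φ hφ (small_vtB G g s hs i hi)
      match i with
      | 0 =>
          have hadj : (graph G).Adj (vB G g s hs) (vtB G g s hs 0 hi) :=
            (adj_vB_iff G g s hs _).2 (Or.inr (Or.inr rfl))
          have hadj2 : (graph G).Adj (vB G (f g) s hs) (φ (vtB G g s hs 0 hi)) := by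
            have := (hφ _ _).1 hadj
            rwa [hB g s hs] at this
          rcases (adj_vB_iff G (f g) s hs _).1 hadj2 with e | e | e
          · rw [e] at hsm
            exact absurd (hasThree_of_big G (big_vb G hn (f g * s))) hsm
          · rw [e] at hsm
            exact absurd (hasThree_vA G (f g) s hs) hsm
          · exact e
      | (j+1) =>
          have hj : j < lenB G s := by omega
          have hadj : (graph G).Adj (vtB G g s hs j hj) (vtB G g s hs (j+1) hi) :=
            (adj_vtB_iff G g s hs j hj _).2 (Or.inr ⟨hi, rfl⟩)
          have hadj2 : (graph G).Adj (vtB G (f g) s hs j hj) (φ (vtB G g s hs (j+1) hi)) := by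
            have := (hφ _ _).1 hadj
            rwa [IH j (by omega) hj] at this
          rcases (adj_vtB_iff G (f g) s hs j hj _).1 hadj2 with e | ⟨hlt, e⟩
          · by_cases hj0 : j = 0
            · subst hj0
              rw [show prevB G (f g) s hs 0 hj = vB G (f g) s hs from by simp [prevB]] at e
              rw [e] at hsm
              exact absurd (hasThree_vB G (f g) s hs) hsm
            · rw [show prevB G (f g) s hs j hj = vtB G (f g) s hs (j-1) (by omega) from by
                simp [prevB, hj0]] at e
              rw [← IH (j-1) (by omega) (by omega)] at e
              have := φ.injective e
              exact absurd this (by simp [vtB, Subtype.ext_iff, Fin.ext_iff]; omega)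
          · exact e
  -- conclude
  refine ⟨f 1, Subtype.ext ?_⟩
  show permMul G (f 1) = φ
  apply Equiv.ext
  intro v
  obtain ⟨rv, hr⟩ := v
  cases rv with
  | base g =>
      have : (⟨Raw.base g, hr⟩ : V G) = vb G g := rfl
      rw [this, hf g, hf1 g]
      rfl
  | nA g s =>
      have : (⟨Raw.nA g s, hr⟩ : V G) = vA G g s hr := rfl
      rw [this, hA g s hr, hf1 g]
      rfl
  | nB g s =>
      have : (⟨Raw.nB g s, hr⟩ : V G) = vB G g s hr := rfl
      rw [this, hB g s hr, hf1 g]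
      rfl
  | tA g s i =>
      have : (⟨Raw.tA g s i, hr⟩ : V G) = vtA G g s hr.1 i.val hr.2 := rfl
      rw [this, htA g s hr.1 i.val hr.2, hf1 g]
      rfl
  | tB g s i =>
      have : (⟨Raw.tB g s i, hr⟩ : V G) = vtB G g s hr.1 i.val hr.2 := rfl
      rw [this, htB g s hr.1 i.val hr.2, hf1 g]
      rfl

noncomputable def mainEquiv (hn : 3 ≤ Fintype.card G) : G ≃* ↥(dirAut (graph G).Adj) :=
  MulEquiv.ofBijective (toAut G) ⟨toAut_injective G, toAut_surjective G hn⟩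

end Frucht

/-- Frucht's theorem: every finite group is isomorphic to the automorphism
group of some finite simple undirected graph. -/
theorem stmt7 (G : Type) [Group G] [Fintype G] :
    ∃ (V : Type) (_ : Fintype V) (Gr : SimpleGraph V),
      Nonempty (G ≃* ↥(dirAut Gr.Adj)) := by
  classical
  rcases lt_or_ge (Fintype.card G) 3 with hc | hc
  · interval_cases h : Fintype.card G
    · exact absurd h (by simp [Fintype.card_ne_zero])
    · -- trivial group
      refine ⟨PUnit, inferInstance, ⊥, ⟨?_⟩⟩
      have hG : Subsingleton G := by
        rw [← Fintype.card_le_one_iff_subsingleton]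
        omega
      have hP : Subsingleton ↥(dirAut (⊥ : SimpleGraph PUnit).Adj) := by
        constructor
        intro a b
        apply Subtype.ext
        apply Equiv.ext
        intro v
        exact Subsingleton.elim _ _
      exact
        { toFun := fun _ => 1
          invFun := fun _ => 1
          left_inv := fun x => Subsingleton.elim _ _
          right_inv := fun x => Subsingleton.elim _ _
          map_mul' := fun _ _ => Subsingleton.elim _ _ }
    · -- order two: the two-vertex complete graph
      refine ⟨Bool, inferInstance, ⊤, ⟨?_⟩⟩
      have htop : dirAut (⊤ : SimpleGraph Bool).Adj = ⊤ := by
        ext φ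
        simp only [Subgroup.mem_top, iff_true]
        rw [Frucht.mem_dirAut_iff]
        intro v w
        simp only [SimpleGraph.top_adj]
        exact ⟨fun h e => h (φ.injective e), fun h e => h (congrArg φ e)⟩
      have : Fact (Nat.Prime 2) := ⟨Nat.prime_two⟩
      refine MulEquiv.trans (mulEquivOfPrimeCardEq (p := 2) ?_ ?_)
        ((Subgroup.topEquiv).symm.trans (MulEquiv.subgroupCongr htop.symm))
      · rw [Nat.card_eq_fintype_card, h]
      · rw [Nat.card_eq_fintype_card, Fintype.card_perm]
        simp
  · exact ⟨Frucht.V G, Fintype.ofFinite _, Frucht.graph G, ⟨Frucht.mainEquiv G hc⟩⟩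
end

section
/- Let 𝕏 be a finite quantum set with quantum adjacency matrices A_i (i = 1,…,n) such that the quantum graphs (𝕏, A_i) are loopless (A_i • I = 0). Let B be the adjacency matrix of a simple graph on {0,…,n} and P_i the coordinate projections on ℂ^{n+1}. Then A' := I ⊗ B + Σ_{i=1}^n A_i ⊗ P_i satisfies A' • A' = A', A' = conj(A'), and A' • I = 0, i.e., A' is the adjacency matrix of a loopless quantum graph on 𝕏 × {0,…,n}. -/
open TensorProduct

/-- The Schur product of two operators: `A • B = m (A ⊗ B) m*`, where `δ = m*`. -/
noncomputable def schur {V : Type*} [AddCommGroup V] [Module ℂ V]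
    (m : V ⊗[ℂ] V →ₗ[ℂ] V) (δ : V →ₗ[ℂ] V ⊗[ℂ] V) (A C : V →ₗ[ℂ] V) : V →ₗ[ℂ] V :=
  m ∘ₗ (TensorProduct.map A C) ∘ₗ δ

/-- The complex conjugate of an operator: `conj(A) f = (A (f*))*`. -/
def conjOp {V : Type*} [AddCommGroup V] [Module ℂ V] [StarAddMonoid V] [StarModule ℂ V]
    (A : V →ₗ[ℂ] V) : V →ₗ[ℂ] V where
  toFun f := star (A (star f))
  map_add' x y := by simp
  map_smul' c x := by simp [star_smul]

/-- The operator `C ⊗ M` on `C(𝕏) ⊗ ℂ^k ≅ (Fin k → C(𝕏))`, for `C` an operator on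
`C(𝕏)` and `M` a `k × k` scalar matrix. -/
def tensOp {B : Type*} [AddCommGroup B] [Module ℂ B] {k : ℕ}
    (C : B →ₗ[ℂ] B) (M : Matrix (Fin k) (Fin k) ℂ) : (Fin k → B) →ₗ[ℂ] (Fin k → B) where
  toFun f := fun j => ∑ i, M j i • C (f i)
  map_add' f g := by
    funext j
    simp [map_add, smul_add, Finset.sum_add_distrib]
  map_smul' c f := by
    funext j
    simp only [Pi.smul_apply, map_smul, Finset.smul_sum, RingHom.id_apply]
    exact Finset.sum_congr rfl fun i _ => smul_comm _ _ _

/-- The comultiplication `m*` of the quantum set `𝕏 × {0,…,k-1}`, whose function algebra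
is `Fin k → C(𝕏)`, induced by the comultiplication `δ` of `C(𝕏)`. -/
noncomputable def piComul {B : Type*} [AddCommGroup B] [Module ℂ B]
    (δ : B →ₗ[ℂ] B ⊗[ℂ] B) (k : ℕ) :
    (Fin k → B) →ₗ[ℂ] (Fin k → B) ⊗[ℂ] (Fin k → B) :=
  ∑ i : Fin k,
    (TensorProduct.map (LinearMap.single ℂ (fun _ : Fin k => B) i)
        (LinearMap.single ℂ (fun _ : Fin k => B) i)) ∘ₗ δ ∘ₗ (LinearMap.proj i)

section Aux

open TensorProduct

variable {B : Type*} [Ring B] [Algebra ℂ B] {k : ℕ}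

lemma tensOp_apply (C : B →ₗ[ℂ] B) (M : Matrix (Fin k) (Fin k) ℂ) (f : Fin k → B) (j : Fin k) :
    tensOp C M f j = ∑ i, M j i • C (f i) := rfl

lemma key (C D : B →ₗ[ℂ] B) (M N : Matrix (Fin k) (Fin k) ℂ) (i j : Fin k) (t : B ⊗[ℂ] B) :
    (LinearMap.mul' ℂ (Fin k → B)) ((TensorProduct.map (tensOp C M) (tensOp D N))
      ((TensorProduct.map (LinearMap.single ℂ (fun _ : Fin k => B) i)
        (LinearMap.single ℂ (fun _ : Fin k => B) i)) t)) j
    = (M j i * N j i) • (LinearMap.mul' ℂ B) ((TensorProduct.map C D) t) := by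
  induction t using TensorProduct.induction_on with
  | zero => simp
  | tmul x y =>
      have h1 : tensOp C M ((LinearMap.single ℂ (fun _ : Fin k => B) i) x) j = M j i • C x := by
        simp [tensOp_apply, Pi.single_apply, apply_ite C]
      have h2 : tensOp D N ((LinearMap.single ℂ (fun _ : Fin k => B) i) y) j = N j i • D y := by
        simp [tensOp_apply, Pi.single_apply, apply_ite D]
      simp only [TensorProduct.map_tmul, LinearMap.mul'_apply, Pi.mul_apply, h1, h2]
      rw [smul_mul_smul_comm]
  | add s t hs ht => simp [map_add, hs, ht, smul_add]

lemma schur_tensOp (δ : B →ₗ[ℂ] B ⊗[ℂ] B) (C D : B →ₗ[ℂ] B)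
    (M N : Matrix (Fin k) (Fin k) ℂ) :
    schur (LinearMap.mul' ℂ (Fin k → B)) (piComul δ k) (tensOp C M) (tensOp D N)
    = tensOp (schur (LinearMap.mul' ℂ B) δ C D) (fun j i => M j i * N j i) := by
  refine LinearMap.ext fun f => funext fun j => ?_
  simp only [schur, LinearMap.comp_apply, piComul, LinearMap.sum_apply, map_sum,
    Finset.sum_apply, tensOp_apply]
  exact Finset.sum_congr rfl fun i _ => key C D M N i j (δ (f i))

lemma schur_add_left {V : Type*} [AddCommGroup V] [Module ℂ V]
    (m : V ⊗[ℂ] V →ₗ[ℂ] V) (δ : V →ₗ[ℂ] V ⊗[ℂ] V) (A₁ A₂ C : V →ₗ[ℂ] V) :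
    schur m δ (A₁ + A₂) C = schur m δ A₁ C + schur m δ A₂ C := by
  ext v; simp [schur, TensorProduct.map_add_left]

lemma schur_add_right {V : Type*} [AddCommGroup V] [Module ℂ V]
    (m : V ⊗[ℂ] V →ₗ[ℂ] V) (δ : V →ₗ[ℂ] V ⊗[ℂ] V) (A C₁ C₂ : V →ₗ[ℂ] V) :
    schur m δ A (C₁ + C₂) = schur m δ A C₁ + schur m δ A C₂ := by
  ext v; simp [schur, TensorProduct.map_add_right]

lemma schur_zero_left {V : Type*} [AddCommGroup V] [Module ℂ V]
    (m : V ⊗[ℂ] V →ₗ[ℂ] V) (δ : V →ₗ[ℂ] V ⊗[ℂ] V) (C : V →ₗ[ℂ] V) :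
    schur m δ 0 C = 0 := by
  ext v
  have : TensorProduct.map (0 : V →ₗ[ℂ] V) C = TensorProduct.map 0 C := rfl
  simp [schur, show (TensorProduct.map (0 : V →ₗ[ℂ] V) C) = 0 from
    TensorProduct.ext' (by simp)]

lemma schur_zero_right {V : Type*} [AddCommGroup V] [Module ℂ V]
    (m : V ⊗[ℂ] V →ₗ[ℂ] V) (δ : V →ₗ[ℂ] V ⊗[ℂ] V) (C : V →ₗ[ℂ] V) :
    schur m δ C 0 = 0 := by
  ext v
  simp [schur, show (TensorProduct.map C (0 : V →ₗ[ℂ] V)) = 0 from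
    TensorProduct.ext' (by simp)]

lemma schur_sum_left {V : Type*} [AddCommGroup V] [Module ℂ V]
    (m : V ⊗[ℂ] V →ₗ[ℂ] V) (δ : V →ₗ[ℂ] V ⊗[ℂ] V) {ι : Type*} (s : Finset ι)
    (F : ι → (V →ₗ[ℂ] V)) (C : V →ₗ[ℂ] V) :
    schur m δ (∑ i ∈ s, F i) C = ∑ i ∈ s, schur m δ (F i) C := by
  classical
  induction s using Finset.cons_induction with
  | empty => simp [schur_zero_left]
  | cons a s ha ih => rw [Finset.sum_cons, Finset.sum_cons, schur_add_left, ih]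

lemma schur_sum_right {V : Type*} [AddCommGroup V] [Module ℂ V]
    (m : V ⊗[ℂ] V →ₗ[ℂ] V) (δ : V →ₗ[ℂ] V ⊗[ℂ] V) {ι : Type*} (s : Finset ι)
    (F : ι → (V →ₗ[ℂ] V)) (C : V →ₗ[ℂ] V) :
    schur m δ C (∑ i ∈ s, F i) = ∑ i ∈ s, schur m δ C (F i) := by
  classical
  induction s using Finset.cons_induction with
  | empty => simp [schur_zero_right]
  | cons a s ha ih => rw [Finset.sum_cons, Finset.sum_cons, schur_add_right, ih]

lemma tensOp_zero_matrix (C : B →ₗ[ℂ] B) : tensOp C (0 : Matrix (Fin k) (Fin k) ℂ) = 0 := by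
  refine LinearMap.ext fun f => funext fun j => ?_; simp [tensOp_apply]

lemma tensOp_zero_op (M : Matrix (Fin k) (Fin k) ℂ) : tensOp (0 : B →ₗ[ℂ] B) M = 0 := by
  refine LinearMap.ext fun f => funext fun j => ?_; simp [tensOp_apply]

lemma tensOp_id_one : tensOp (LinearMap.id : B →ₗ[ℂ] B) (1 : Matrix (Fin k) (Fin k) ℂ)
    = LinearMap.id := by
  refine LinearMap.ext fun f => funext fun j => ?_; simp [tensOp_apply, Matrix.one_apply]

lemma tensOp_congr (C D : B →ₗ[ℂ] B) (M N : Matrix (Fin k) (Fin k) ℂ)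
    (h1 : C = D) (h2 : M = N) : tensOp C M = tensOp D N := by rw [h1, h2]

lemma conjOp_add {V : Type*} [AddCommGroup V] [Module ℂ V] [StarAddMonoid V] [StarModule ℂ V]
    (A C : V →ₗ[ℂ] V) : conjOp (A + C) = conjOp A + conjOp C := by
  ext v; simp [conjOp]

lemma conjOp_sum {V : Type*} [AddCommGroup V] [Module ℂ V] [StarAddMonoid V] [StarModule ℂ V]
    {ι : Type*} (s : Finset ι) (F : ι → (V →ₗ[ℂ] V)) :
    conjOp (∑ i ∈ s, F i) = ∑ i ∈ s, conjOp (F i) := by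
  classical
  induction s using Finset.cons_induction with
  | empty => ext v; simp [conjOp]
  | cons a s ha ih => rw [Finset.sum_cons, Finset.sum_cons, conjOp_add, ih]

lemma conjOp_tensOp [StarRing B] [StarModule ℂ B] (C : B →ₗ[ℂ] B)
    (M : Matrix (Fin k) (Fin k) ℂ) :
    conjOp (tensOp C M) = tensOp (conjOp C) (fun j i => star (M j i)) := by
  refine LinearMap.ext fun f => funext fun j => ?_
  simp [conjOp, tensOp_apply, star_sum, star_smul]
  rfl

lemma schur_id_id (δ : B →ₗ[ℂ] B ⊗[ℂ] B)
    (hδ : (LinearMap.mul' ℂ B) ∘ₗ δ = LinearMap.id) :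
    schur (LinearMap.mul' ℂ B) δ LinearMap.id LinearMap.id = LinearMap.id := by
  simp [schur, TensorProduct.map_id, hδ]

end Aux

/-- Given loopless quantum adjacency matrices `A_i` on a finite quantum set
`𝕏` and the adjacency matrix `Bm` of a simple graph on `{0,…,n}`, the operator
`A' = I ⊗ Bm + Σ_i A_i ⊗ P_i` is a real Schur idempotent with `A' • I = 0`, i.e. the
adjacency matrix of a loopless quantum graph on `𝕏 × {0,…,n}`. -/
theorem stmt9 (n : ℕ) (B : Type*) [Ring B] [Algebra ℂ B] [StarRing B] [StarModule ℂ B]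
    [FiniteDimensional ℂ B]
    (δ : B →ₗ[ℂ] B ⊗[ℂ] B)
    (hδ : (LinearMap.mul' ℂ B) ∘ₗ δ = LinearMap.id)
    (A : Fin n → (B →ₗ[ℂ] B))
    (hA : ∀ i, schur (LinearMap.mul' ℂ B) δ (A i) (A i) = A i)
    (hAreal : ∀ i, conjOp (A i) = A i)
    (hAloop : ∀ i, schur (LinearMap.mul' ℂ B) δ (A i) LinearMap.id = 0)
    (Bm : Matrix (Fin (n + 1)) (Fin (n + 1)) ℂ)
    (hBsymm : Bm.IsSymm) (hBdiag : ∀ i, Bm i i = 0)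
    (hB01 : ∀ i j, Bm i j = 0 ∨ Bm i j = 1) :
    ∀ A' : (Fin (n + 1) → B) →ₗ[ℂ] (Fin (n + 1) → B),
      A' = tensOp LinearMap.id Bm +
        ∑ i : Fin n, tensOp (A i) (Matrix.single i.succ i.succ 1) →
      schur (LinearMap.mul' ℂ (Fin (n + 1) → B)) (piComul δ (n + 1)) A' A' = A' ∧
      conjOp A' = A' ∧
      schur (LinearMap.mul' ℂ (Fin (n + 1) → B)) (piComul δ (n + 1)) A' LinearMap.id = 0 := by
  intro A' hA'
  subst hA'
  have hEapp : ∀ (i : Fin n) (j j' : Fin (n + 1)),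
      Matrix.single i.succ i.succ (1 : ℂ) j j'
        = if j = i.succ ∧ j' = i.succ then 1 else 0 := by
    intro i j j'
    simp [Matrix.single, and_comm, eq_comm]
  have hBB : (fun j i => Bm j i * Bm j i) = Bm := by
    funext j i
    rcases hB01 j i with h | h <;> simp [h]
  have hBE : ∀ i : Fin n, (fun j j' => Bm j j' * Matrix.single i.succ i.succ (1 : ℂ) j j')
      = (0 : Matrix (Fin (n + 1)) (Fin (n + 1)) ℂ) := by
    intro i; funext j j'
    rw [hEapp]
    by_cases h : j = i.succ ∧ j' = i.succ
    · simp [h.1, h.2, hBdiag]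
    · simp [h]
  have hEB : ∀ i : Fin n, (fun j j' => Matrix.single i.succ i.succ (1 : ℂ) j j' * Bm j j')
      = (0 : Matrix (Fin (n + 1)) (Fin (n + 1)) ℂ) := by
    intro i; funext j j'
    rw [hEapp]
    by_cases h : j = i.succ ∧ j' = i.succ
    · simp [h.1, h.2, hBdiag]
    · simp [h]
  have hEE : ∀ i i' : Fin n,
      (fun j j' => Matrix.single i.succ i.succ (1 : ℂ) j j'
        * Matrix.single i'.succ i'.succ (1 : ℂ) j j')
      = (if i = i' then Matrix.single i.succ i.succ (1 : ℂ) else 0) := by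
    intro i i'; funext j j'
    rw [hEapp, hEapp]
    by_cases h : i = i'
    · subst h
      by_cases h2 : j = i.succ ∧ j' = i.succ <;> simp [h2, hEapp]
    · by_cases h2 : j = i.succ ∧ j' = i.succ
      · have : ¬(j = i'.succ ∧ j' = i'.succ) := by
          rintro ⟨r1, r2⟩
          exact h (Fin.succ_injective _ (h2.1.symm.trans r1))
        simp [h2, this, h, hEapp]
      · simp [h2, h, hEapp]
  have hB1 : (fun j j' => Bm j j' * (1 : Matrix (Fin (n + 1)) (Fin (n + 1)) ℂ) j j')
      = (0 : Matrix (Fin (n + 1)) (Fin (n + 1)) ℂ) := by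
    funext j j'
    by_cases h : j = j'
    · subst h; simp [hBdiag]
    · simp [Matrix.one_apply, h]
  refine ⟨?_, ?_, ?_⟩
  · -- Schur idempotent
    simp only [schur_add_left, schur_add_right, schur_sum_left, schur_sum_right,
      schur_tensOp]
    rw [schur_id_id δ hδ, hBB]
    have e2 : ∀ i : Fin n,
        tensOp (schur (LinearMap.mul' ℂ B) δ LinearMap.id (A i))
          (fun j j' => Bm j j' * Matrix.single i.succ i.succ (1 : ℂ) j j') = 0 := by
      intro i; rw [hBE i]; exact tensOp_zero_matrix _
    have e3 : ∀ i : Fin n,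
        tensOp (schur (LinearMap.mul' ℂ B) δ (A i) LinearMap.id)
          (fun j j' => Matrix.single i.succ i.succ (1 : ℂ) j j' * Bm j j') = 0 := by
      intro i; rw [hEB i]; exact tensOp_zero_matrix _
    have e4 : ∀ i : Fin n,
        (∑ i' : Fin n, tensOp (schur (LinearMap.mul' ℂ B) δ (A i') (A i))
          (fun j j' => Matrix.single i'.succ i'.succ (1 : ℂ) j j'
            * Matrix.single i.succ i.succ (1 : ℂ) j j'))
        = tensOp (A i) (Matrix.single i.succ i.succ (1 : ℂ)) := by
      intro i
      rw [Finset.sum_eq_single i]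
      · rw [hEE i i, hA i]; simp
      · intro i' _ hne
        rw [hEE i' i]
        simp [hne, tensOp_zero_matrix]
      · intro h; exact absurd (Finset.mem_univ i) h
    simp only [e2, e3, e4, Finset.sum_const_zero, add_zero, zero_add]
  · -- real
    have hstarB : (fun j i => star (Bm j i)) = Bm := by
      funext j i
      rcases hB01 j i with h | h <;> simp [h]
    have hstarE : ∀ i : Fin n,
        (fun j j' => star (Matrix.single i.succ i.succ (1 : ℂ) j j'))
          = Matrix.single i.succ i.succ (1 : ℂ) := by
      intro i; funext j j'
      rw [hEapp]
      by_cases h : j = i.succ ∧ j' = i.succ <;> simp [h, hEapp]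
    have hconjid : conjOp (LinearMap.id : B →ₗ[ℂ] B) = LinearMap.id := by
      ext v; simp [conjOp]
    rw [conjOp_add, conjOp_sum, conjOp_tensOp, hconjid, hstarB]
    congr 1
    refine Finset.sum_congr rfl fun i _ => ?_
    rw [conjOp_tensOp, hAreal i, hstarE i]
  · -- loopless
    rw [show (LinearMap.id : (Fin (n + 1) → B) →ₗ[ℂ] (Fin (n + 1) → B))
        = tensOp LinearMap.id 1 from tensOp_id_one.symm]
    simp only [schur_add_left, schur_sum_left, schur_tensOp]
    rw [hB1, tensOp_zero_matrix]
    have : ∀ i : Fin n,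
        tensOp (schur (LinearMap.mul' ℂ B) δ (A i) LinearMap.id)
          (fun j j' => Matrix.single i.succ i.succ (1 : ℂ) j j'
            * (1 : Matrix (Fin (n + 1)) (Fin (n + 1)) ℂ) j j') = 0 := by
      intro i
      rw [hAloop i]; exact tensOp_zero_op _
    simp [this]
end

section
/- Let Γ be a finite group and π : Γ → U(H) a faithful irreducible unitary representation on a finite-dimensional complex Hilbert space H. Then there exists a vector ξ ∈ H such that the matrix coefficient g ↦ ⟨ξ, π(g) ξ⟩ is injective on Γ (separates the points of Γ). -/
open scoped InnerProductSpace
open MvPolynomial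

/-- A nonzero operator on a complex inner product space has a nonzero diagonal
matrix coefficient (complex polarization). -/
lemma stmt12_aux_nonzero {H : Type*} [NormedAddCommGroup H] [InnerProductSpace ℂ H]
    (T : H →ₗ[ℂ] H) (hT : T ≠ 0) : ∃ ξ : H, ⟪ξ, T ξ⟫_ℂ ≠ 0 := by
  by_contra hc
  push_neg at hc
  exact hT ((inner_map_self_eq_zero T).mp fun x => by
    rw [← inner_conj_symm]; simp [hc x])

/-- Expansion of a quadratic matrix coefficient in real coordinates. -/
lemma stmt12_aux_expand {H : Type*} [NormedAddCommGroup H] [InnerProductSpace ℂ H]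
    (n : ℕ) (b : Fin n → H) (c : Fin n → ℝ) (T : H →ₗ[ℂ] H) :
    ⟪∑ i, c i • b i, T (∑ j, c j • b j)⟫_ℂ
      = ∑ i, ∑ j, (c i : ℂ) * (c j : ℂ) * ⟪b i, T (b j)⟫_ℂ := by
  rw [map_sum, sum_inner]
  refine Finset.sum_congr rfl fun i _ => ?_
  rw [inner_sum]
  refine Finset.sum_congr rfl fun j _ => ?_
  rw [LinearMap.map_smul_of_tower, RCLike.real_smul_eq_coe_smul (K := ℂ),
    RCLike.real_smul_eq_coe_smul (K := ℂ), inner_smul_left, inner_smul_right]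
  ring_nf
  simp [mul_comm, mul_assoc, mul_left_comm]

/-- If `π` is a faithful irreducible unitary representation of a finite
group `Γ` on a finite-dimensional complex Hilbert space `H`, then there is a vector
`ξ ∈ H` whose matrix coefficient `g ↦ ⟨ξ, π(g) ξ⟩` separates the points of `Γ`. -/
theorem stmt12 (Γ : Type*) [Group Γ] [Fintype Γ]
    (H : Type*) [NormedAddCommGroup H] [InnerProductSpace ℂ H] [FiniteDimensional ℂ H]
    (π : Γ →* (H →ₗ[ℂ] H))
    (hunit : ∀ g (x y : H), ⟪π g x, π g y⟫_ℂ = ⟪x, y⟫_ℂ)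
    (hfaith : Function.Injective π)
    (hirr : ∀ U : Submodule ℂ H, (∀ g, ∀ x ∈ U, π g x ∈ U) → U = ⊥ ∨ U = ⊤) :
    ∃ ξ : H, Function.Injective (fun g : Γ => ⟪ξ, π g ξ⟫_ℂ) := by
  classical
  set n := Module.finrank ℝ H with hn
  let b : Module.Basis (Fin n) ℝ H := Module.finBasis ℝ H
  -- real polynomials giving the real and imaginary parts of the matrix coefficient
  let A : (H →ₗ[ℂ] H) → MvPolynomial (Fin n) ℝ := fun T =>
    ∑ i, ∑ j, MvPolynomial.C ((⟪b i, T (b j)⟫_ℂ).re) * (X i * X j)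
  let B : (H →ₗ[ℂ] H) → MvPolynomial (Fin n) ℝ := fun T =>
    ∑ i, ∑ j, MvPolynomial.C ((⟪b i, T (b j)⟫_ℂ).im) * (X i * X j)
  have evalA : ∀ (T : H →ₗ[ℂ] H) (c : Fin n → ℝ),
      eval c (A T) = (⟪∑ i, c i • b i, T (∑ j, c j • b j)⟫_ℂ).re := by
    intro T c
    rw [stmt12_aux_expand n b c T]
    simp only [A, map_sum, map_mul, eval_C, eval_X, Complex.re_sum]
    refine Finset.sum_congr rfl fun i _ => Finset.sum_congr rfl fun j _ => ?_
    rw [← mul_assoc, ← Complex.ofReal_mul, Complex.re_ofReal_mul]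
    ring
  have evalB : ∀ (T : H →ₗ[ℂ] H) (c : Fin n → ℝ),
      eval c (B T) = (⟪∑ i, c i • b i, T (∑ j, c j • b j)⟫_ℂ).im := by
    intro T c
    rw [stmt12_aux_expand n b c T]
    simp only [B, map_sum, map_mul, eval_C, eval_X, Complex.im_sum]
    refine Finset.sum_congr rfl fun i _ => Finset.sum_congr rfl fun j _ => ?_
    rw [← mul_assoc, ← Complex.ofReal_mul, Complex.im_ofReal_mul]
    ring
  let Q : (H →ₗ[ℂ] H) → MvPolynomial (Fin n) ℝ := fun T => A T ^ 2 + B T ^ 2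
  have evalQ : ∀ (T : H →ₗ[ℂ] H) (c : Fin n → ℝ),
      eval c (Q T) = (⟪∑ i, c i • b i, T (∑ j, c j • b j)⟫_ℂ).re ^ 2
        + (⟪∑ i, c i • b i, T (∑ j, c j • b j)⟫_ℂ).im ^ 2 := by
    intro T c
    simp only [Q, map_add, map_pow, evalA, evalB]
  have hQeval_ne : ∀ (T : H →ₗ[ℂ] H) (c : Fin n → ℝ),
      eval c (Q T) ≠ 0 → ⟪∑ i, c i • b i, T (∑ j, c j • b j)⟫_ℂ ≠ 0 := by
    intro T c hne h0
    rw [evalQ, h0] at hne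
    simp at hne
  -- each pair's polynomial is nonzero
  have hQ : ∀ g h : Γ, g ≠ h → Q (π g - π h) ≠ 0 := by
    intro g h hgh
    have hT : (π g - π h : H →ₗ[ℂ] H) ≠ 0 := by
      rw [sub_ne_zero]
      exact fun e => hgh (hfaith e)
    obtain ⟨ξ, hξ⟩ := stmt12_aux_nonzero _ hT
    intro h0
    apply hξ
    have hrep : (∑ i, b.repr ξ i • b i) = ξ := b.sum_repr ξ
    have := evalQ (π g - π h) (fun i => b.repr ξ i)
    rw [h0] at this
    simp only [map_zero] at this
    rw [hrep] at this
    have hre : (⟪ξ, (π g - π h) ξ⟫_ℂ).re = 0 := by nlinarith [sq_nonneg (⟪ξ, (π g - π h) ξ⟫_ℂ).re, sq_nonneg (⟪ξ, (π g - π h) ξ⟫_ℂ).im]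
    have him : (⟪ξ, (π g - π h) ξ⟫_ℂ).im = 0 := by nlinarith [sq_nonneg (⟪ξ, (π g - π h) ξ⟫_ℂ).re, sq_nonneg (⟪ξ, (π g - π h) ξ⟫_ℂ).im]
    exact Complex.ext hre him
  -- the product over all distinct pairs is a nonzero polynomial
  let Pset : Finset (Γ × Γ) := Finset.univ.filter (fun p => p.1 ≠ p.2)
  let P : MvPolynomial (Fin n) ℝ := ∏ p ∈ Pset, Q (π p.1 - π p.2)
  have hP : P ≠ 0 := by
    rw [Finset.prod_ne_zero_iff]
    intro p hp
    exact hQ p.1 p.2 (Finset.mem_filter.mp hp).2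
  -- since ℝ is infinite, there is a point where P is nonzero
  have hc : ∃ c : Fin n → ℝ, eval c P ≠ 0 := by
    by_contra hcon
    push_neg at hcon
    exact hP (MvPolynomial.funext fun x => by rw [hcon x, map_zero])
  obtain ⟨c, hc⟩ := hc
  refine ⟨∑ i, c i • b i, ?_⟩
  intro g h heq
  by_contra hgh
  have hfac : eval c (Q (π g - π h)) ≠ 0 := by
    have : eval c P = ∏ p ∈ Pset, eval c (Q (π p.1 - π p.2)) := by
      simp [P, map_prod]
    rw [this, Finset.prod_ne_zero_iff] at hc
    exact hc (g, h) (Finset.mem_filter.mpr ⟨Finset.mem_univ _, hgh⟩)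
  apply hQeval_ne _ _ hfac
  simp only [LinearMap.sub_apply, inner_sub_right]
  rw [sub_eq_zero]
  exact heq
end

section
/- Let Γ be a finite nonabelian group and suppose that for two distinct elements g, h ∈ Γ and every irreducible complex representation α of Γ there is a scalar c_α with α(g) − α(h) = c_α · 1. Then both g and h belong to the center of Γ. -/
open MonoidAlgebra

-- helper: Finsupp single difference injectivity
lemma stmt14_single_aux {X : Type*} (a b c d : X) (hab : a ≠ b) (_hcd : c ≠ d)
    (h : Finsupp.single a (1:ℂ) - Finsupp.single b 1
        = Finsupp.single c 1 - Finsupp.single d 1) : a = c ∧ b = d := by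
  classical
  have ha := DFunLike.congr_fun h a
  simp only [Finsupp.sub_apply, Finsupp.single_apply] at ha
  rw [if_true, if_neg (Ne.symm hab)] at ha
  by_cases hca : c = a
  · subst hca
    refine ⟨rfl, ?_⟩
    have h3 := h
    rw [sub_eq_sub_iff_sub_eq_sub, sub_self] at h3
    have h2 : (Finsupp.single b (1:ℂ)) = Finsupp.single d 1 := sub_eq_zero.mp h3.symm
    exact (Finsupp.single_left_inj one_ne_zero).mp h2
  · rw [if_neg hca] at ha
    by_cases hda : d = a <;> simp [hda] at ha
    · exact absurd ha (by norm_num)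


lemma stmt14_main0 (Γ : Type) [Group Γ] [Fintype Γ] (g h : Γ) (hgh : g ≠ h)
    (hrep : ∀ (V : Type) [AddCommGroup V] [Module ℂ V] [FiniteDimensional ℂ V]
        (α : Representation ℂ Γ V),
        (∀ U : Submodule ℂ V, (∀ t : Γ, ∀ x ∈ U, α t x ∈ U) → U = ⊥ ∨ U = ⊤) →
        ∃ c : ℂ, α g - α h = c • LinearMap.id) :
    ∀ t : Γ, t * g = g * t ∧ t * h = h * t := by
  classical
  have scalar : ∀ W : Submodule (MonoidAlgebra ℂ Γ) (MonoidAlgebra ℂ Γ),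
      IsSimpleModule (MonoidAlgebra ℂ Γ) ↥W →
      ∃ c : ℂ, ∀ x ∈ W, (of ℂ Γ g - of ℂ Γ h) * x = c • x := by
    intro W hs
    haveI : FiniteDimensional ℂ (MonoidAlgebra ℂ Γ) := Module.Finite.equiv (MonoidAlgebra.coeffLinearEquiv ℂ).symm
    haveI : FiniteDimensional ℂ ↥W :=
      FiniteDimensional.of_injective ((W.subtype).restrictScalars ℂ) Subtype.coe_injective
    let α : Representation ℂ Γ ↥W :=
    { toFun := fun s =>
      { toFun := fun x => (of ℂ Γ s) • x
        map_add' := fun x y => smul_add _ x y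
        map_smul' := fun c x => (smul_comm c (of ℂ Γ s) x).symm }
      map_one' := by ext x; simp
      map_mul' := fun a b => by ext x; simp [map_mul, mul_smul, mul_assoc] }
    have hirr : ∀ U : Submodule ℂ ↥W, (∀ s : Γ, ∀ x ∈ U, α s x ∈ U) → U = ⊥ ∨ U = ⊤ := by
      intro U hU
      let U' : Submodule (MonoidAlgebra ℂ Γ) ↥W :=
      { carrier := U
        add_mem' := fun {a b} ha hb => U.add_mem ha hb
        zero_mem' := U.zero_mem
        smul_mem' := by
          intro a x hx
          induction a using MonoidAlgebra.induction_on with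
          | of s => exact hU s x hx
          | add f g hf hg => rw [add_smul]; exact U.add_mem hf hg
          | smul r f hf => rw [smul_assoc]; exact U.smul_mem r hf }
      haveI := hs
      rcases eq_bot_or_eq_top U' with hb | ht
      · left; ext x
        simpa [U'] using SetLike.ext_iff.mp hb x
      · right; ext x
        simpa [U'] using SetLike.ext_iff.mp ht x
    obtain ⟨c, hc⟩ := hrep ↥W α hirr
    refine ⟨c, fun x hx => ?_⟩
    have h1 := LinearMap.ext_iff.mp hc ⟨x, hx⟩
    have h2 := congrArg (Subtype.val) h1
    simpa [α, sub_mul, smul_eq_mul] using h2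
  have key : ∀ t : Γ, of ℂ Γ t * (of ℂ Γ g - of ℂ Γ h)
      = (of ℂ Γ g - of ℂ Γ h) * of ℂ Γ t := by
    intro t
    set d : MonoidAlgebra ℂ Γ := of ℂ Γ g - of ℂ Γ h with hd
    have hsup : ∀ x : MonoidAlgebra ℂ Γ, of ℂ Γ t * (d * x) = d * (of ℂ Γ t * x) := by
      intro x
      have hx : x ∈ (⊤ : Submodule (MonoidAlgebra ℂ Γ) (MonoidAlgebra ℂ Γ)) := trivial
      rw [← IsSemisimpleModule.sSup_simples_eq_top, sSup_eq_iSup'] at hx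
      refine Submodule.iSup_induction _ (motive := fun x => of ℂ Γ t * (d * x) = d * (of ℂ Γ t * x))
        hx ?_ (by simp) ?_
      · rintro ⟨W, hW⟩ x hxW
        obtain ⟨c, hc⟩ := scalar W hW
        have h1 : d * x = c • x := hc x hxW
        have h2 : d * (of ℂ Γ t * x) = c • (of ℂ Γ t * x) := by
          refine hc _ ?_
          simpa [smul_eq_mul] using W.smul_mem (of ℂ Γ t) hxW
        rw [h1, h2, mul_smul_comm]
      · intro x y hx hy
        rw [mul_add, mul_add, mul_add, mul_add, hx, hy]
    have := hsup 1
    simpa using this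
  intro t
  have keq := key t
  rw [mul_sub, sub_mul, ← map_mul, ← map_mul, ← map_mul, ← map_mul] at keq
  simp only [MonoidAlgebra.of_apply] at keq
  have := stmt14_single_aux (t*g) (t*h) (g*t) (h*t)
    (fun e => hgh (mul_left_cancel e)) (fun e => hgh (mul_right_cancel e))
      (by simpa only [MonoidAlgebra.coeff_sub, MonoidAlgebra.coeff_single] using congrArg MonoidAlgebra.coeff keq)
  exact this
def stmt14Carrier (n : ℕ) : Type := Fin n

/-- If `Γ` is a finite nonabelian group, `g ≠ h` are elements of `Γ`, and
for every finite-dimensional irreducible complex representation `α` of `Γ` the operator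
`α(g) − α(h)` is a scalar multiple of the identity, then both `g` and `h` lie in the
center of `Γ`. -/
theorem stmt14 (Γ : Type*) [Group Γ] [Fintype Γ]
    (hnab : ∃ a b : Γ, a * b ≠ b * a)
    (g h : Γ) (hgh : g ≠ h)
    (hrep : ∀ (V : Type) [AddCommGroup V] [Module ℂ V] [FiniteDimensional ℂ V]
        (α : Representation ℂ Γ V),
        (∀ U : Submodule ℂ V, (∀ t : Γ, ∀ x ∈ U, α t x ∈ U) → U = ⊥ ∨ U = ⊤) →
        ∃ c : ℂ, α g - α h = c • LinearMap.id) :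
    g ∈ Subgroup.center Γ ∧ h ∈ Subgroup.center Γ := by
  classical
  let n := Fintype.card Γ
  let e0 : stmt14Carrier n ≃ Γ := ((Fintype.equivFin Γ).symm : Fin n ≃ Γ)
  letI : Group (stmt14Carrier n) := Equiv.group e0
  letI : Fintype (stmt14Carrier n) := Fintype.ofEquiv Γ e0.symm
  let φ : stmt14Carrier n ≃* Γ :=
    { e0 with map_mul' := fun a b => e0.apply_symm_apply _ }
  let ψ : Γ ≃* stmt14Carrier n := φ.symm
  have hrep0 : ∀ (V : Type) [AddCommGroup V] [Module ℂ V] [FiniteDimensional ℂ V]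
      (α₀ : Representation ℂ (stmt14Carrier n) V),
      (∀ U : Submodule ℂ V, (∀ s : stmt14Carrier n, ∀ x ∈ U, α₀ s x ∈ U) → U = ⊥ ∨ U = ⊤) →
      ∃ c : ℂ, α₀ (ψ g) - α₀ (ψ h) = c • LinearMap.id := by
    intro V _ _ _ α₀ hirr0
    have := hrep V (α₀.comp ψ.toMonoidHom) ?_
    · simpa using this
    · intro U hU
      refine hirr0 U ?_
      intro s x hx
      have := hU (φ s) x hx
      simpa [ψ] using this
  have hcomm := stmt14_main0 (stmt14Carrier n) (ψ g) (ψ h)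
    (fun e => hgh (ψ.injective e)) hrep0
  constructor
  · rw [Subgroup.mem_center_iff]
    intro z
    have h1 := (hcomm (ψ z)).1
    rw [← map_mul ψ, ← map_mul ψ] at h1
    exact ψ.injective h1
  · rw [Subgroup.mem_center_iff]
    intro z
    have h1 := (hcomm (ψ z)).2
    rw [← map_mul ψ, ← map_mul ψ] at h1
    exact ψ.injective h1
end
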